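/- Let ρ: ℝ → ℝ be convex, symmetric, with ρ(0) = 0 and ρ(x) > 0 for x ≠ 0, let λ > 0 and 1 ≤ h ≤ n. Let Z = (X, y) be any sample of n observations with p ≥ 1 predictors. Then for every constant M > 0 there exists a corrupted sample Z̃ obtained from Z by replacing m = n − h + 1 observations by a common point z(γ, τ) = ((τ, 0, …, 0)', γτ) with suitable γ, τ > 0, such that every minimizer β̂ of Q_{Z̃}(β) = Σ_{i=1}^{h} (ρ(ỹ − X̃β))_{i:n} + h λ Σ_{j=1}^{p} |β_j| satisfies ‖β̂‖₂ > M. Consequently, the breakdown point of this estimator is at most (n − h + 1)/n. -/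

import Mathlib

open Finset

/-- The `i`-th order statistic of the vector `r`, i.e. the `i`-th entry after sorting
the entries of `r` in nondecreasing order. -/
noncomputable def orderStat {n : ℕ} (r : Fin n → ℝ) (i : Fin n) : ℝ :=
  r (Tuple.sort r i)

/-- The sum of the `h` smallest entries (order statistics) of the vector `r`. -/
noncomputable def trimmedSum {n : ℕ} (h : ℕ) (r : Fin n → ℝ) : ℝ :=
  ∑ i ∈ Finset.univ.filter (fun i : Fin n => (i : ℕ) < h), orderStat r i

/-- The L¹ norm of a coefficient vector `β ∈ ℝ^p`. -/
noncomputable def l1norm {p : ℕ} (β : Fin p → ℝ) : ℝ := ∑ j, |β j|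

/-- The Euclidean (L²) norm of a coefficient vector `β ∈ ℝ^p`. -/
noncomputable def euclNorm {p : ℕ} (β : Fin p → ℝ) : ℝ := Real.sqrt (∑ j, β j ^ 2)

/-- `Corrupt m X X' y y'` : the sample `(X', y')` is obtained from the sample `(X, y)` by
replacing (at most) `m` of the `n` observations `(xᵢ', yᵢ)` by arbitrary values. -/
def Corrupt {n p : ℕ} (m : ℕ) (X X' : Fin n → Fin p → ℝ) (y y' : Fin n → ℝ) : Prop :=
  ∃ s : Finset (Fin n), s.card ≤ m ∧ ∀ i ∉ s, (∀ j, X' i j = X i j) ∧ y' i = y i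

/-- The trimmed penalized objective function
`Q_Z̃(β) = Σ_{i=1}^{h} (ρ(ỹ − X̃β))_{i:n} + h λ Σ_j |β_j|` with loss `ρ`. -/
noncomputable def QGen {n p : ℕ} (ρ : ℝ → ℝ) (lam : ℝ) (h : ℕ)
    (X : Fin n → Fin p → ℝ) (y : Fin n → ℝ) (β : Fin p → ℝ) : ℝ :=
  trimmedSum h (fun i => ρ (y i - ∑ j, X i j * β j)) + (h : ℝ) * lam * l1norm β

/-- The design matrix obtained from `X` by replacing the last `n − h + 1` observations
(indices `i ≥ h − 1`) by the predictor vector `x(τ) = (τ, 0, …, 0)'`. -/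
noncomputable def contamX {n p : ℕ} (h : ℕ) (X : Fin n → Fin p → ℝ) (τ : ℝ) :
    Fin n → Fin p → ℝ :=
  fun i j => if (i : ℕ) < h - 1 then X i j else if (j : ℕ) = 0 then τ else 0

/-- The response vector obtained from `y` by replacing the last `n − h + 1` observations
(indices `i ≥ h − 1`) by the response `y(γ, τ) = γτ`. -/
noncomputable def contamY {n : ℕ} (h : ℕ) (y : Fin n → ℝ) (γ τ : ℝ) : Fin n → ℝ :=
  fun i => if (i : ℕ) < h - 1 then y i else γ * τ

/-- `BreaksDown est X y m` : the supremum of `‖est(Z̃)‖₂` over all samples `Z̃` obtained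
from `Z = (X, y)` by replacing `m` observations by arbitrary values is infinite. -/
def BreaksDown {n p : ℕ} (est : (Fin n → Fin p → ℝ) → (Fin n → ℝ) → Fin p → ℝ)
    (X : Fin n → Fin p → ℝ) (y : Fin n → ℝ) (m : ℕ) : Prop :=
  ∀ M : ℝ, ∃ X' y', Corrupt m X X' y y' ∧ M < euclNorm (est X' y')

/-- The replacement finite-sample breakdown point
`ε*(est; Z) = min{ m/n : sup_{Z̃} ‖est(Z̃)‖₂ = ∞ }`. -/
noncomputable def breakdownPoint {n p : ℕ}
    (est : (Fin n → Fin p → ℝ) → (Fin n → ℝ) → Fin p → ℝ)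
    (X : Fin n → Fin p → ℝ) (y : Fin n → ℝ) : ℝ :=
  ((sInf {m : ℕ | BreaksDown est X y m} : ℕ) : ℝ) / n

private lemma trimmedSum_le_sum {n h : ℕ} (r : Fin n → ℝ) (hr : ∀ i, 0 ≤ r i) :
    trimmedSum h r ≤ ∑ i, r i := by
  classical
  unfold trimmedSum orderStat
  have himg := Finset.sum_image (s := Finset.univ.filter (fun i : Fin n => (i : ℕ) < h))
    (f := r) (g := fun i => Tuple.sort r i)
    (fun a _ b _ hab => (Tuple.sort r).injective hab)
  rw [← himg]
  exact Finset.sum_le_sum_of_subset_of_nonneg (Finset.subset_univ _) (fun i _ _ => hr i)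

private lemma le_trimmedSum {n h : ℕ} (hhn : h ≤ n) (r : Fin n → ℝ)
    (hr : ∀ i, 0 ≤ r i) (c : ℝ)
    (hcard : (Finset.univ.filter fun i => r i < c).card < h) :
    c ≤ trimmedSum h r := by
  classical
  set P := Finset.univ.filter (fun i : Fin n => (i : ℕ) < h) with hP
  have hPcard : h ≤ P.card := by
    have : ((Finset.univ : Finset (Fin h)).card) ≤ P.card := by
      apply Finset.card_le_card_of_injOn (fun i => Fin.castLE hhn i)
      · intro i _
        simp [hP, Fin.castLE]
      · intro a _ b _ hab
        exact Fin.castLE_injective hhn hab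
    simpa using this
  obtain ⟨i0, hi0P, hi0⟩ : ∃ i ∈ P, c ≤ r (Tuple.sort r i) := by
    by_contra hcon
    push_neg at hcon
    have hsub : h ≤ (Finset.univ.filter fun i => r i < c).card := by
      calc h ≤ P.card := hPcard
        _ ≤ _ := by
          apply Finset.card_le_card_of_injOn (fun i => Tuple.sort r i)
          · intro i hi
            simp only [Finset.mem_filter, Finset.mem_univ, true_and]
            simpa using hcon i hi
          · intro a _ b _ hab
            exact (Tuple.sort r).injective hab
    omega
  calc c ≤ r (Tuple.sort r i0) := hi0
    _ ≤ trimmedSum h r := by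
        refine Finset.single_le_sum (f := fun i => orderStat r i) ?_ hi0P
        intro i _
        exact hr _

private lemma rho_mono (ρ : ℝ → ℝ) (hconv : ConvexOn ℝ Set.univ ρ) (hsym : ∀ x, ρ (-x) = ρ x)
    {a b : ℝ} (ha : 0 ≤ a) (hab : a ≤ b) : ρ a ≤ ρ b := by
  rcases eq_or_lt_of_le (ha.trans hab) with hb | hb
  · have h0 : a = 0 := le_antisymm (hab.trans hb.symm.le) ha
    rw [h0, ← hb]
  · have hs : (0:ℝ) ≤ (b + a) / (2 * b) := by positivity
    have ht : (0:ℝ) ≤ (b - a) / (2 * b) := div_nonneg (by linarith) (by linarith)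
    have hst : (b + a) / (2 * b) + (b - a) / (2 * b) = 1 := by field_simp; ring
    have hconv2 := hconv.2 (Set.mem_univ b) (Set.mem_univ (-b)) hs ht hst
    have hcomb : (b + a) / (2 * b) * b + (b - a) / (2 * b) * (-b) = a := by
      field_simp; ring
    rw [smul_eq_mul, smul_eq_mul, smul_eq_mul, smul_eq_mul, hcomb, hsym] at hconv2
    calc ρ a ≤ (b + a) / (2 * b) * ρ b + (b - a) / (2 * b) * ρ b := hconv2
      _ = ρ b := by rw [← add_mul, hst, one_mul]

private lemma rho_superlin (ρ : ℝ → ℝ) (hconv : ConvexOn ℝ Set.univ ρ) (hzero : ρ 0 = 0)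
    {b : ℝ} (hb : 1 ≤ b) : b * ρ 1 ≤ ρ b := by
  have hb0 : 0 < b := lt_of_lt_of_le one_pos hb
  have hs : (0:ℝ) ≤ 1 / b := by positivity
  have ht : (0:ℝ) ≤ 1 - 1 / b := by
    have : 1 / b ≤ 1 := by rw [div_le_one hb0]; exact hb
    linarith
  have hst : 1 / b + (1 - 1 / b) = 1 := by ring
  have h2 := hconv.2 (Set.mem_univ b) (Set.mem_univ 0) hs ht hst
  rw [smul_eq_mul, smul_eq_mul, smul_eq_mul, smul_eq_mul, hzero, mul_zero, add_zero,
    one_div, inv_mul_cancel₀ hb0.ne'] at h2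
  calc b * ρ 1 ≤ b * (1 / b * ρ b) := by
        refine mul_le_mul_of_nonneg_left ?_ hb0.le
        rw [one_div]; linarith
    _ = ρ b := by field_simp

private lemma card_filter_lt_ge {n k : ℕ} (hk : k ≤ n) :
    k ≤ (Finset.univ.filter fun i : Fin n => (i : ℕ) < k).card := by
  classical
  have h1 : ((Finset.univ : Finset (Fin k))).card ≤
      (Finset.univ.filter fun i : Fin n => (i : ℕ) < k).card := by
    apply Finset.card_le_card_of_injOn (fun i => Fin.castLE hk i)
    · intro i _
      simp [Fin.castLE]
    · intro a _ b _ hab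
      exact Fin.castLE_injective hk hab
  simpa using h1

private lemma card_filter_lt_le {n k : ℕ} :
    (Finset.univ.filter fun i : Fin n => (i : ℕ) < k).card ≤ k := by
  classical
  have h1 : (Finset.univ.filter fun i : Fin n => (i : ℕ) < k).card ≤
      (Finset.range k).card := by
    apply Finset.card_le_card_of_injOn Fin.val
    · intro i hi
      simp only [Finset.coe_filter, Finset.mem_univ, true_and, Set.mem_setOf_eq] at hi
      simpa using hi
    · intro a _ b _ hab
      exact Fin.val_injective hab
  simpa using h1

/-- Upper-bound half of Theorem 1: for every bound `M > 0` there are `γ, τ > 0` such that for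
the sample obtained from `Z = (X, y)` by replacing the last `m = n − h + 1` observations by
the common point `z(γ, τ) = ((τ, 0, …, 0)', γτ)`, every minimizer of the trimmed penalized
objective has Euclidean norm larger than `M`. Consequently, for any estimator that always
picks a minimizer, the breakdown point is at most `(n − h + 1)/n`. -/
theorem trimmed_penalized_breakdown_above
    {n p h : ℕ} (hp : 1 ≤ p) (hh1 : 1 ≤ h) (hhn : h ≤ n)
    (ρ : ℝ → ℝ) (hconv : ConvexOn ℝ Set.univ ρ) (hsym : ∀ x : ℝ, ρ (-x) = ρ x)
    (hzero : ρ 0 = 0) (hpos : ∀ x : ℝ, x ≠ 0 → 0 < ρ x)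
    (lam : ℝ) (hlam : 0 < lam)
    (X : Fin n → Fin p → ℝ) (y : Fin n → ℝ) :
    (∀ M : ℝ, 0 < M → ∃ γ τ : ℝ, 0 < γ ∧ 0 < τ ∧
      Corrupt (n - h + 1) X (contamX h X τ) y (contamY h y γ τ) ∧
      ∀ β : Fin p → ℝ,
        (∀ β' : Fin p → ℝ,
          QGen ρ lam h (contamX h X τ) (contamY h y γ τ) β ≤
            QGen ρ lam h (contamX h X τ) (contamY h y γ τ) β') →
        M < euclNorm β) ∧
    (∀ est : (Fin n → Fin p → ℝ) → (Fin n → ℝ) → Fin p → ℝ,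
      (∀ (X₀ : Fin n → Fin p → ℝ) (y₀ : Fin n → ℝ) (β : Fin p → ℝ),
        QGen ρ lam h X₀ y₀ (est X₀ y₀) ≤ QGen ρ lam h X₀ y₀ β) →
      breakdownPoint est X y ≤ ((n : ℝ) - h + 1) / n) := by
  classical
  have hn1 : 1 ≤ n := le_trans hh1 hhn
  set e0 : Fin p := ⟨0, hp⟩ with he0
  have hrho_nonneg : ∀ x : ℝ, 0 ≤ ρ x := by
    intro x
    rcases eq_or_ne x 0 with hx | hx
    · rw [hx, hzero]
    · exact (hpos x hx).le
  have main : ∀ M : ℝ, 0 < M → ∃ γ τ : ℝ, 0 < γ ∧ 0 < τ ∧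
      Corrupt (n - h + 1) X (contamX h X τ) y (contamY h y γ τ) ∧
      ∀ β : Fin p → ℝ,
        (∀ β' : Fin p → ℝ,
          QGen ρ lam h (contamX h X τ) (contamY h y γ τ) β ≤
            QGen ρ lam h (contamX h X τ) (contamY h y γ τ) β') →
        M < euclNorm β := by
    intro M hM
    set γ : ℝ := M + 1 with hγ
    have hγpos : 0 < γ := by rw [hγ]; linarith
    set βs : Fin p → ℝ := fun j => if j = e0 then γ else 0 with hβs
    have hl1βs : l1norm βs = γ := by
      unfold l1norm
      rw [hβs]
      simp [apply_ite abs, abs_of_pos hγpos, Finset.sum_ite_eq']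
    set D : ℝ := ∑ i : Fin n, (if (i : ℕ) < h - 1 then ρ (y i - X i e0 * γ) else 0) with hD
    have hDnn : 0 ≤ D := by
      rw [hD]
      refine Finset.sum_nonneg fun i _ => ?_
      by_cases hi : (i : ℕ) < h - 1 <;> simp [hi, hrho_nonneg]
    set C : ℝ := D + (h : ℝ) * lam * γ with hC
    have hCnn : 0 ≤ C := by
      have : 0 ≤ (h : ℝ) * lam * γ := by positivity
      rw [hC]; linarith
    have hρ1 : 0 < ρ 1 := hpos 1 one_ne_zero
    set τ : ℝ := max 1 ((C + 1) / ρ 1) with hτ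
    have hτ1 : 1 ≤ τ := le_max_left _ _
    have hτpos : 0 < τ := lt_of_lt_of_le one_pos hτ1
    have hρτ : C + 1 ≤ ρ τ := by
      have h1 := rho_superlin ρ hconv hzero hτ1
      have h2 : (C + 1) / ρ 1 * ρ 1 ≤ τ * ρ 1 :=
        mul_le_mul_of_nonneg_right (le_max_right _ _) hρ1.le
      rw [div_mul_cancel₀ _ hρ1.ne'] at h2
      linarith
    -- row sum for contaminated observations
    have hrowsum : ∀ (β : Fin p → ℝ) (i : Fin n), ¬ (i : ℕ) < h - 1 →
        ∑ j, contamX h X τ i j * β j = τ * β e0 := by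
      intro β i hi
      unfold contamX
      simp only [if_neg hi]
      calc ∑ j : Fin p, (if (j : ℕ) = 0 then τ else 0) * β j
          = ∑ j, (if j = e0 then τ * β j else 0) := by
            refine Finset.sum_congr rfl fun j _ => ?_
            by_cases hj : j = e0
            · rw [if_pos (by simp [hj, he0]), if_pos hj]
            · rw [if_neg (fun hc => hj (Fin.ext (by simp [hc, he0]))), if_neg hj, zero_mul]
        _ = τ * β e0 := by rw [Finset.sum_ite_eq' Finset.univ e0]; simp
    refine ⟨γ, τ, hγpos, hτpos, ?_, ?_⟩
    · -- Corrupt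
      refine ⟨Finset.univ.filter (fun i : Fin n => ¬ (i : ℕ) < h - 1), ?_, ?_⟩
      · have hsplit := Finset.card_filter_add_card_filter_not
          (s := (Finset.univ : Finset (Fin n))) (p := fun i : Fin n => (i : ℕ) < h - 1)
        have hge : h - 1 ≤ (Finset.univ.filter fun i : Fin n => (i : ℕ) < h - 1).card :=
          card_filter_lt_ge (by omega)
        have hcu : (Finset.univ : Finset (Fin n)).card = n := by simp
        omega
      · intro i hi
        simp only [Finset.mem_filter, Finset.mem_univ, true_and, not_not] at hi
        exact ⟨fun j => by simp [contamX, hi], by simp [contamY, hi]⟩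
    · -- every minimizer is large
      intro β hminβ
      by_contra hcon
      push_neg at hcon
      have habs : |β e0| ≤ euclNorm β := by
        unfold euclNorm
        rw [← Real.sqrt_sq_eq_abs]
        exact Real.sqrt_le_sqrt
          (Finset.single_le_sum (fun j _ => sq_nonneg (β j)) (Finset.mem_univ e0))
      have hβ0 : β e0 ≤ M := le_trans (le_trans (le_abs_self _) habs) hcon
      set r : Fin n → ℝ :=
        fun i => ρ (contamY h y γ τ i - ∑ j, contamX h X τ i j * β j) with hr
      have hrnn : ∀ i, 0 ≤ r i := fun i => hrho_nonneg _
      have hbig : ∀ i : Fin n, ¬ (i : ℕ) < h - 1 → ρ τ ≤ r i := by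
        intro i hi
        have h1 : r i = ρ (γ * τ - τ * β e0) := by
          rw [hr]
          simp only
          rw [hrowsum β i hi]
          congr 1
          simp [contamY, hi]
        rw [h1]
        refine rho_mono ρ hconv hsym hτpos.le ?_
        nlinarith [mul_nonneg hτpos.le (by linarith : (0:ℝ) ≤ γ - β e0 - 1)]
      have hsmall : (Finset.univ.filter fun i => r i < ρ τ).card < h := by
        have hsub : (Finset.univ.filter fun i => r i < ρ τ) ⊆
            Finset.univ.filter (fun i : Fin n => (i : ℕ) < h - 1) := by
          intro i hi
          simp only [Finset.mem_filter, Finset.mem_univ, true_and] at hi ⊢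
          by_contra hh
          exact absurd (hbig i hh) (not_le.2 hi)
        have h1 := Finset.card_le_card hsub
        have h2 := card_filter_lt_le (n := n) (k := h - 1)
        omega
      have hQβ : ρ τ ≤ QGen ρ lam h (contamX h X τ) (contamY h y γ τ) β := by
        have h1 : ρ τ ≤ trimmedSum h r := le_trimmedSum hhn r hrnn (ρ τ) hsmall
        have h2 : 0 ≤ (h : ℝ) * lam * l1norm β := by
          refine mul_nonneg (mul_nonneg (Nat.cast_nonneg h) hlam.le) ?_
          exact Finset.sum_nonneg fun j _ => abs_nonneg _
        show ρ τ ≤ trimmedSum h r + (h : ℝ) * lam * l1norm β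
        linarith
      have hQβs : QGen ρ lam h (contamX h X τ) (contamY h y γ τ) βs ≤ C := by
        have hts : trimmedSum h
            (fun i => ρ (contamY h y γ τ i - ∑ j, contamX h X τ i j * βs j)) ≤ D := by
          refine le_trans (trimmedSum_le_sum _ fun i => hrho_nonneg _) ?_
          rw [hD]
          refine Finset.sum_le_sum fun i _ => ?_
          by_cases hi : (i : ℕ) < h - 1
          · rw [if_pos hi]
            apply le_of_eq
            have hY : contamY h y γ τ i = y i := by simp [contamY, hi]
            have hS : ∑ j, contamX h X τ i j * βs j = X i e0 * γ := by
              calc ∑ j, contamX h X τ i j * βs j = ∑ j, X i j * βs j :=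
                    Finset.sum_congr rfl fun j _ => by simp [contamX, hi]
                _ = X i e0 * γ := by
                    rw [hβs]
                    simp [mul_ite, mul_zero, Finset.sum_ite_eq']
            simp only [hY, hS]
          · rw [if_neg hi]
            apply le_of_eq
            have hY : contamY h y γ τ i = γ * τ := by simp [contamY, hi]
            have hS : ∑ j, contamX h X τ i j * βs j = τ * γ := by
              rw [hrowsum βs i hi, hβs]; simp
            have hz : γ * τ - τ * γ = 0 := by ring
            simp only [hY, hS, hz, hzero]
        show trimmedSum h
            (fun i => ρ (contamY h y γ τ i - ∑ j, contamX h X τ i j * βs j)) +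
            (h : ℝ) * lam * l1norm βs ≤ C
        rw [hl1βs, hC]
        linarith
      have hle := hminβ βs
      linarith
  refine ⟨main, ?_⟩
  intro est hest
  have hbd : BreaksDown est X y (n - h + 1) := by
    intro M
    obtain ⟨γ, τ, hγ, hτ, hcorr, hmin⟩ :=
      main (max M 1) (lt_of_lt_of_le one_pos (le_max_right M 1))
    exact ⟨contamX h X τ, contamY h y γ τ, hcorr,
      lt_of_le_of_lt (le_max_left M 1) (hmin _ (fun β' => hest _ _ β'))⟩
  have hinf : sInf {m : ℕ | BreaksDown est X y m} ≤ n - h + 1 := Nat.sInf_le hbd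
  unfold breakdownPoint
  have hnpos : (0 : ℝ) < n := by exact_mod_cast hn1
  have hcast : ((sInf {m : ℕ | BreaksDown est X y m} : ℕ) : ℝ) ≤ (n : ℝ) - h + 1 := by
    have h1 : ((sInf {m : ℕ | BreaksDown est X y m} : ℕ) : ℝ) ≤ ((n - h + 1 : ℕ) : ℝ) := by
      exact_mod_cast hinf
    have h2 : ((n - h + 1 : ℕ) : ℝ) = (n : ℝ) - h + 1 := by
      rw [Nat.cast_add, Nat.cast_sub hhn, Nat.cast_one]
    linarith [h2 ▸ h1]
  exact (div_le_div_iff_of_pos_right hnpos).mpr hcast
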